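/- For every nonnegative integer n, Σ_{m=0}^{n} S2_C(n, m) · CC_m equals 1/L_j if n = r^j − 1 for some nonnegative integer j, and equals 0 otherwise; here S2_C denotes the Stirling-Carlitz numbers of the second kind and CC_m the Cauchy-Carlitz numbers. -/

import Mathlib

open scoped Classical
open PowerSeries Finset

noncomputable section

variable (F : Type) [Field F] [Fintype F]

/-- The rational function field `K = 𝔽_r(T)`. -/
abbrev K : Type := RatFunc F

/-- `r`, the cardinality of the finite field of constants. -/
def rr : ℕ := Fintype.card F

/-- The variable `T` of the rational function field. -/
def Tv : K F := RatFunc.X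

/-- `[i] = T^{r^i} - T`. -/
def br (i : ℕ) : K F := Tv F ^ (rr F) ^ i - Tv F

/-- `D_0 = 1`, `D_i = [i] · D_{i-1}^r`. -/
def D : ℕ → K F
  | 0 => 1
  | i + 1 => br F (i + 1) * D i ^ rr F

/-- `L_0 = 1`, `L_i = [i] · L_{i-1}`. -/
def L : ℕ → K F
  | 0 => 1
  | i + 1 => br F (i + 1) * L i

/-- The Carlitz factorial `Π(n) = ∏_j D_j^{c_j}`, where `c_j = n / r^j % r` are the
base-`r` digits of `n` (all digits with index `> n` vanish since `r ≥ 2`). -/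
def Cf (n : ℕ) : K F := ∏ j ∈ Finset.range (n + 1), D F j ^ (n / (rr F) ^ j % rr F)

/-- The Carlitz logarithm `log_C(z) = Σ_{i ≥ 0} (-1)^i z^{r^i} / L_i`: the coefficient of
`z^m` is `(-1)^i / L_i` if `m = r^i` and `0` otherwise (note `i ≤ r^i = m` since `r ≥ 2`). -/
def logC : PowerSeries (K F) :=
  PowerSeries.mk fun m =>
    ∑ i ∈ Finset.range (m + 1), if m = (rr F) ^ i then (-1 : K F) ^ i / L F i else 0

/-- The Carlitz exponential `e_C(z) = Σ_{i ≥ 0} z^{r^i} / D_i`. -/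
def eC : PowerSeries (K F) :=
  PowerSeries.mk fun m =>
    ∑ i ∈ Finset.range (m + 1), if m = (rr F) ^ i then 1 / D F i else 0

/-- The power series `log_C(z)/z`. -/
def logCdivZ : PowerSeries (K F) :=
  PowerSeries.mk fun n => PowerSeries.coeff (R := K F) (n + 1) (logC F)

/-- The power series `e_C(z)/z`. -/
def eCdivZ : PowerSeries (K F) :=
  PowerSeries.mk fun n => PowerSeries.coeff (R := K F) (n + 1) (eC F)

section Aux

lemma two_le_rr : 2 ≤ rr F := Fintype.one_lt_card

lemma rr_pos : 0 < rr F := by have := two_le_rr F; omega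

lemma Tpow_sub_ne {m : ℕ} (hm : 2 ≤ m) : Tv F ^ m - Tv F ≠ 0 := by
  have hX : Tv F ^ m - Tv F
      = algebraMap (Polynomial F) (RatFunc F) (Polynomial.X ^ m - Polynomial.X) := by
    simp [Tv, map_sub, map_pow, RatFunc.algebraMap_X]
  rw [hX]
  intro h
  have h0 : (Polynomial.X ^ m - Polynomial.X : Polynomial F) = 0 :=
    RatFunc.algebraMap_injective F (by simpa using h)
  have := congrArg (fun q => Polynomial.coeff q m) h0
  simp only [Polynomial.coeff_sub, Polynomial.coeff_zero] at this
  rw [Polynomial.coeff_X_pow, if_pos rfl, Polynomial.coeff_X,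
    if_neg (by omega : ¬ (1 = m))] at this
  simp at this

lemma br_zero : br F 0 = 0 := by simp [br]

lemma br_ne {i : ℕ} (hi : i ≠ 0) : br F i ≠ 0 := by
  apply Tpow_sub_ne
  calc 2 ≤ rr F := two_le_rr F
    _ = rr F ^ 1 := (pow_one _).symm
    _ ≤ rr F ^ i := Nat.pow_le_pow_right (rr_pos F) (by omega)

lemma D_succ (i : ℕ) : D F (i + 1) = br F (i + 1) * D F i ^ rr F := rfl

lemma L_succ (i : ℕ) : L F (i + 1) = br F (i + 1) * L F i := rfl

lemma D_ne (i : ℕ) : D F i ≠ 0 := by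
  induction i with
  | zero => simp [D]
  | succ i ih => exact mul_ne_zero (br_ne F (by omega)) (pow_ne_zero _ ih)

lemma L_ne (i : ℕ) : L F i ≠ 0 := by
  induction i with
  | zero => simp [L]
  | succ i ih => exact mul_ne_zero (br_ne F (by omega)) ih

lemma Cf_ne (n : ℕ) : Cf F n ≠ 0 := by
  refine Finset.prod_ne_zero_iff.2 fun j _ => pow_ne_zero _ (D_ne F j)

lemma aux_char : ∃ p s : ℕ, p.Prime ∧ rr F = p ^ s ∧ CharP (K F) p := by
  haveI : CharP F (ringChar F) := ringChar.charP F
  obtain ⟨s, hp, hcard⟩ := FiniteField.card F (ringChar F)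
  exact ⟨ringChar F, s, hp, hcard,
    charP_of_injective_ringHom (algebraMap F (K F)).injective _⟩

lemma constantCoeff_eC : PowerSeries.constantCoeff (R := K F) (eC F) = 0 := by
  rw [← PowerSeries.coeff_zero_eq_constantCoeff_apply, eC, PowerSeries.coeff_mk]
  simp [(Nat.one_le_iff_ne_zero.mp (Nat.one_le_pow _ _ (rr_pos F))).symm]

lemma coeff_eC_pow_zero_of_lt {m n : ℕ} (h : n < m) :
    PowerSeries.coeff (R := K F) n (eC F ^ m) = 0 := by
  have hX : (PowerSeries.X : PowerSeries (K F)) ^ m ∣ eC F ^ m :=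
    pow_dvd_pow_of_dvd (PowerSeries.X_dvd_iff.2 (constantCoeff_eC F)) m
  exact PowerSeries.X_pow_dvd_iff.mp hX n h

lemma coeff_eC_rpow (j : ℕ) :
    PowerSeries.coeff (R := K F) (rr F ^ j) (eC F) = (D F j)⁻¹ := by
  rw [eC, PowerSeries.coeff_mk]
  have h1 : ∀ i ∈ Finset.range (rr F ^ j + 1),
      (if rr F ^ j = rr F ^ i then (1 : K F) / D F i else 0)
        = (if i = j then (D F i)⁻¹ else 0) := by
    intro i _
    refine if_congr ?_ (one_div _) rfl
    constructor
    · intro h; exact (Nat.pow_right_injective (two_le_rr F) h.symm)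
    · intro h; rw [h]
  rw [Finset.sum_congr rfl h1, Finset.sum_ite_eq' (Finset.range (rr F ^ j + 1)) j
    (fun i => (D F i)⁻¹)]
  rw [if_pos]
  exact Finset.mem_range.2 (by have := Nat.lt_pow_self (n := j) (two_le_rr F); omega)

lemma coeff_eC_not {m : ℕ} (hm : ∀ j, m ≠ rr F ^ j) :
    PowerSeries.coeff (R := K F) m (eC F) = 0 := by
  rw [eC, PowerSeries.coeff_mk]
  exact Finset.sum_eq_zero fun i _ => if_neg (hm i)

end Aux
section Aux2

lemma PS_charP {p : ℕ} (hc : CharP (K F) p) : CharP (PowerSeries (K F)) p := by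
  haveI := hc
  have hinj : Function.Injective (PowerSeries.C (R := K F)) := fun a b h => by
    simpa using congrArg (PowerSeries.constantCoeff (R := K F)) h
  exact charP_of_injective_ringHom hinj p

lemma coeff_pow_char {p : ℕ} (hp : p.Prime) (hc : CharP (K F) p)
    (f : PowerSeries (K F)) (n : ℕ) :
    PowerSeries.coeff (R := K F) n (f ^ p)
      = if p ∣ n then (PowerSeries.coeff (R := K F) (n / p) f) ^ p else 0 := by
  haveI := hc
  haveI : Fact p.Prime := ⟨hp⟩
  haveI : CharP (PowerSeries (K F)) p := PS_charP F hc
  set g : Polynomial (K F) := PowerSeries.trunc (n + 1) f with hg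
  have hdvd : (PowerSeries.X : PowerSeries (K F)) ^ (n + 1) ∣ f - ↑g := by
    rw [PowerSeries.X_pow_dvd_iff]
    intro m hm
    simp [hg, PowerSeries.coeff_trunc, hm, Polynomial.coeff_coe]
  obtain ⟨h, hh⟩ := hdvd
  have hf : f = (↑g : PowerSeries (K F)) + PowerSeries.X ^ (n + 1) * h := by
    rw [← hh]; ring
  rw [hf, add_pow_char, mul_pow, ← pow_mul, map_add]
  have hz : PowerSeries.coeff (R := K F) n
      ((PowerSeries.X : PowerSeries (K F)) ^ ((n + 1) * p) * h ^ p) = 0 := by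
    refine PowerSeries.X_pow_dvd_iff.mp (dvd_mul_right _ _) n ?_
    have := hp.two_le; nlinarith
  rw [hz, add_zero, ← Polynomial.coe_pow, Polynomial.coeff_coe,
    ← Polynomial.map_frobenius_expand (p := p) g, Polynomial.coeff_map, Polynomial.coeff_expand hp.pos]
  by_cases hd : p ∣ n
  · rw [if_pos hd, if_pos hd]
    have hlt : n / p < n + 1 := by have := Nat.div_le_self n p; omega
    rw [frobenius_def, hg, PowerSeries.coeff_trunc, if_pos hlt, ← hf]
  · rw [if_neg hd, if_neg hd, map_zero]

lemma coeff_pow_char_pow {p : ℕ} (hp : p.Prime) (hc : CharP (K F) p)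
    (f : PowerSeries (K F)) (t n : ℕ) :
    PowerSeries.coeff (R := K F) n (f ^ p ^ t)
      = if p ^ t ∣ n then (PowerSeries.coeff (R := K F) (n / p ^ t) f) ^ p ^ t else 0 := by
  induction t generalizing n with
  | zero => simp
  | succ t ih =>
    have hstep : f ^ p ^ (t + 1) = (f ^ p ^ t) ^ p := by
      rw [← pow_mul, pow_succ]
    rw [hstep, coeff_pow_char F hp hc]
    by_cases hd : p ∣ n
    · rw [if_pos hd, ih]
      by_cases hd2 : p ^ t ∣ n / p
      · have hd3 : p ^ (t + 1) ∣ n := by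
          rw [pow_succ']
          exact (Nat.dvd_div_iff_mul_dvd hd).mp hd2
        rw [if_pos hd2, if_pos hd3, ← pow_mul, ← pow_succ,
          Nat.div_div_eq_div_mul, ← pow_succ']
      · have hd3 : ¬ p ^ (t + 1) ∣ n := by
          intro hcon
          exact hd2 ((Nat.dvd_div_iff_mul_dvd hd).mpr (by rwa [← pow_succ']))
        rw [if_neg hd2, if_neg hd3, zero_pow hp.ne_zero]
    · have hd3 : ¬ p ^ (t + 1) ∣ n := fun hcon =>
        hd (dvd_trans (dvd_pow_self p (Nat.succ_ne_zero t)) hcon)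
      rw [if_neg hd, if_neg hd3]

lemma coeff_eC_pow_rpow {p s : ℕ} (hp : p.Prime) (hc : CharP (K F) p)
    (hcard : rr F = p ^ s) (i n : ℕ) :
    PowerSeries.coeff (R := K F) n (eC F ^ rr F ^ i)
      = if rr F ^ i ∣ n then (PowerSeries.coeff (R := K F) (n / rr F ^ i) (eC F)) ^ rr F ^ i
        else 0 := by
  have h1 : rr F ^ i = p ^ (s * i) := by rw [hcard, ← pow_mul]
  rw [h1, coeff_pow_char_pow F hp hc]

lemma coeff_eC_pow_at_rpow_le {p s : ℕ} (hp : p.Prime) (hc : CharP (K F) p)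
    (hcard : rr F = p ^ s) {i k : ℕ} (hik : i ≤ k) :
    PowerSeries.coeff (R := K F) (rr F ^ k) (eC F ^ rr F ^ i)
      = ((D F (k - i))⁻¹) ^ rr F ^ i := by
  rw [coeff_eC_pow_rpow F hp hc hcard, if_pos (pow_dvd_pow _ hik),
    Nat.pow_div hik (rr_pos F), coeff_eC_rpow]

lemma coeff_eC_pow_at_rpow_gt {p s : ℕ} (hp : p.Prime) (hc : CharP (K F) p)
    (hcard : rr F = p ^ s) {i k : ℕ} (hik : k < i) :
    PowerSeries.coeff (R := K F) (rr F ^ k) (eC F ^ rr F ^ i) = 0 := by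
  rw [coeff_eC_pow_rpow F hp hc hcard, if_neg]
  intro hcon
  exact absurd ((Nat.pow_dvd_pow_iff_le_right (two_le_rr F)).mp hcon) (by omega)

lemma coeff_eC_pow_not {p s : ℕ} (hp : p.Prime) (hc : CharP (K F) p)
    (hcard : rr F = p ^ s) {n : ℕ} (hn : ∀ j, n ≠ rr F ^ j) (i : ℕ) :
    PowerSeries.coeff (R := K F) n (eC F ^ rr F ^ i) = 0 := by
  rw [coeff_eC_pow_rpow F hp hc hcard]
  by_cases hd : rr F ^ i ∣ n
  · rw [if_pos hd]
    have : PowerSeries.coeff (R := K F) (n / rr F ^ i) (eC F) = 0 := by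
      apply coeff_eC_not
      intro j hj
      exact hn (i + j) (by rw [← Nat.div_mul_cancel hd, hj, pow_add, mul_comm])
    rw [this, zero_pow (Nat.pos_iff_ne_zero.mp (pow_pos (rr_pos F) i))]
  · rw [if_neg hd]

end Aux2
section Aux3
set_option synthInstance.maxHeartbeats 1000000

/-- Composition with `eC`, defined coefficientwise. -/
def ccomp (f : PowerSeries (K F)) : PowerSeries (K F) :=
  PowerSeries.mk fun n =>
    ∑ m ∈ Finset.range (n + 1),
      PowerSeries.coeff (R := K F) m f * PowerSeries.coeff (R := K F) n (eC F ^ m)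

lemma coeff_aeval (q : Polynomial (K F)) (n : ℕ) :
    PowerSeries.coeff (R := K F) n (Polynomial.aeval (eC F) q)
      = ∑ m ∈ Finset.range (n + 1),
          q.coeff m * PowerSeries.coeff (R := K F) n (eC F ^ m) := by
  rw [Polynomial.aeval_eq_sum_range, map_sum]
  simp_rw [PowerSeries.smul_eq_C_mul, PowerSeries.coeff_C_mul]
  set M := max (q.natDegree + 1) (n + 1) with hM
  rw [Finset.sum_subset (Finset.range_subset_range.2 (le_max_left _ _ : q.natDegree + 1 ≤ M))
    (fun m _ hm => by
      rw [Polynomial.coeff_eq_zero_of_natDegree_lt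
        (by have := Finset.mem_range.not.mp hm; omega), zero_mul])]
  rw [Finset.sum_subset (Finset.range_subset_range.2 (le_max_right _ _ : n + 1 ≤ M))
    (fun m _ hm => by
      rw [coeff_eC_pow_zero_of_lt F (by have := Finset.mem_range.not.mp hm; omega), mul_zero])]

lemma coeff_ccomp (f : PowerSeries (K F)) {n N : ℕ} (hN : n < N) :
    PowerSeries.coeff (R := K F) n (ccomp F f)
      = PowerSeries.coeff (R := K F) n (Polynomial.aeval (eC F) (PowerSeries.trunc N f)) := by
  rw [coeff_aeval, ccomp, PowerSeries.coeff_mk]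
  refine Finset.sum_congr rfl fun m hm => ?_
  rw [PowerSeries.coeff_trunc, if_pos (by have := Finset.mem_range.mp hm; omega)]

lemma ccomp_mul (f g : PowerSeries (K F)) :
    ccomp F (f * g) = ccomp F f * ccomp F g := by
  ext n
  rw [coeff_ccomp F (f * g) (Nat.lt_succ_self n), PowerSeries.coeff_mul]
  have hL : PowerSeries.coeff (R := K F) n
        (Polynomial.aeval (eC F) (PowerSeries.trunc (n + 1) (f * g)))
      = PowerSeries.coeff (R := K F) n
          (Polynomial.aeval (eC F)
            (PowerSeries.trunc (n + 1) f * PowerSeries.trunc (n + 1) g)) := by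
    rw [coeff_aeval, coeff_aeval]
    refine Finset.sum_congr rfl fun m hm => ?_
    have hmn : m < n + 1 := Finset.mem_range.mp hm
    congr 1
    rw [PowerSeries.coeff_trunc, if_pos hmn, Polynomial.coeff_mul, PowerSeries.coeff_mul]
    refine Finset.sum_congr rfl fun x hx => ?_
    have hxm := Finset.HasAntidiagonal.mem_antidiagonal.mp hx
    rw [PowerSeries.coeff_trunc, PowerSeries.coeff_trunc,
      if_pos (by omega), if_pos (by omega)]
  rw [hL, map_mul, PowerSeries.coeff_mul]
  refine Finset.sum_congr rfl fun x hx => ?_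
  have hxm := Finset.HasAntidiagonal.mem_antidiagonal.mp hx
  rw [coeff_ccomp F f (show x.1 < n + 1 by omega),
    coeff_ccomp F g (show x.2 < n + 1 by omega)]

lemma ccomp_one : ccomp F 1 = 1 := by
  ext n
  rw [ccomp, PowerSeries.coeff_mk]
  simp_rw [PowerSeries.coeff_one, ite_mul, zero_mul, one_mul]
  rw [Finset.sum_ite_eq' (Finset.range (n + 1)) 0
    (fun m => PowerSeries.coeff (R := K F) n (eC F ^ m))]
  simp

lemma ccomp_X : ccomp F PowerSeries.X = eC F := by
  ext n
  rw [ccomp, PowerSeries.coeff_mk]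
  simp_rw [PowerSeries.coeff_X, ite_mul, zero_mul, one_mul]
  rw [Finset.sum_ite_eq' (Finset.range (n + 1)) 1
    (fun m => PowerSeries.coeff (R := K F) n (eC F ^ m))]
  by_cases hn : 1 ∈ Finset.range (n + 1)
  · rw [if_pos hn, pow_one]
  · rw [if_neg hn]
    have : n = 0 := by have := Finset.mem_range.not.mp hn; omega
    rw [this, PowerSeries.coeff_zero_eq_constantCoeff_apply, constantCoeff_eC]

lemma logC_eq : logC F = PowerSeries.X * logCdivZ F := by
  ext n
  cases n with
  | zero =>
    rw [PowerSeries.coeff_zero_eq_constantCoeff_apply, PowerSeries.coeff_zero_eq_constantCoeff_apply]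
    rw [map_mul, PowerSeries.constantCoeff_X, zero_mul]
    rw [← PowerSeries.coeff_zero_eq_constantCoeff_apply, logC, PowerSeries.coeff_mk]
    refine Finset.sum_eq_zero fun i _ => if_neg ?_
    exact (Nat.one_le_iff_ne_zero.mp (Nat.one_le_pow _ _ (rr_pos F))).symm
  | succ n =>
    rw [PowerSeries.coeff_succ_X_mul, logCdivZ, PowerSeries.coeff_mk]

lemma eC_eq : eC F = PowerSeries.X * eCdivZ F := by
  ext n
  cases n with
  | zero =>
    rw [PowerSeries.coeff_zero_eq_constantCoeff_apply, PowerSeries.coeff_zero_eq_constantCoeff_apply]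
    rw [map_mul, PowerSeries.constantCoeff_X, zero_mul, constantCoeff_eC]
  | succ n =>
    rw [PowerSeries.coeff_succ_X_mul, eCdivZ, PowerSeries.coeff_mk]

end Aux3
section Aux4

lemma term_u (i : ℕ) (w : K F) :
    br F (i + 1) * ((-1 : K F) ^ (i + 1) / L F (i + 1) * w)
      = -((-1 : K F) ^ i / L F i * w) := by
  have hb := br_ne F (Nat.succ_ne_zero i)
  have hL := L_ne F i
  rw [L_succ]
  field_simp
  ring

lemma term_v (i j q : ℕ) :
    br F (j + 1) ^ q * ((-1 : K F) ^ i / L F i * ((D F (j + 1))⁻¹) ^ q)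
      = (-1 : K F) ^ i / L F i * ((D F j)⁻¹) ^ (rr F * q) := by
  have hb := br_ne F (Nat.succ_ne_zero j)
  have h1 : br F (j + 1) ^ q * ((br F (j + 1))⁻¹) ^ q = 1 := by
    rw [← mul_pow, mul_inv_cancel₀ hb, one_pow]
  have h2 : ((D F j ^ rr F)⁻¹) ^ q = ((D F j)⁻¹) ^ (rr F * q) := by
    rw [inv_pow, inv_pow, ← pow_mul]
  calc br F (j + 1) ^ q * ((-1 : K F) ^ i / L F i * ((D F (j + 1))⁻¹) ^ q)
      = (br F (j + 1) ^ q * ((br F (j + 1))⁻¹) ^ q)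
          * ((-1 : K F) ^ i / L F i * ((D F j ^ rr F)⁻¹) ^ q) := by
        rw [D_succ, mul_inv, mul_pow]; ring
    _ = (-1 : K F) ^ i / L F i * ((D F j)⁻¹) ^ (rr F * q) := by
        rw [h1, one_mul, h2]

lemma br_split {p s : ℕ} (hp : p.Prime) (hc : CharP (K F) p)
    (hcard : rr F = p ^ s) {i k : ℕ} (hik : i ≤ k) :
    br F k = br F i + br F (k - i) ^ rr F ^ i := by
  haveI := hc
  haveI : Fact p.Prime := ⟨hp⟩
  have hq : rr F ^ i = p ^ (s * i) := by rw [hcard, ← pow_mul]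
  have h3 : (Tv F ^ rr F ^ (k - i)) ^ rr F ^ i = Tv F ^ rr F ^ k := by
    rw [← pow_mul, ← pow_add, Nat.sub_add_cancel hik]
  have h4 : (Tv F ^ rr F ^ (k - i) - Tv F) ^ rr F ^ i
      = (Tv F ^ rr F ^ (k - i)) ^ rr F ^ i - Tv F ^ rr F ^ i := by
    rw [hq]; exact sub_pow_char_pow (Tv F ^ rr F ^ (k - i)) (Tv F) (s * i)
  rw [br, br, br, h4, h3]; ring

lemma Ssum {p s : ℕ} (hp : p.Prime) (hc : CharP (K F) p)
    (hcard : rr F = p ^ s) {k : ℕ} (hk : k ≠ 0) :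
    ∑ i ∈ Finset.range (k + 1),
      (-1 : K F) ^ i / L F i * ((D F (k - i))⁻¹) ^ rr F ^ i = 0 := by
  have hbrk := br_ne F hk
  apply mul_left_cancel₀ hbrk
  rw [mul_zero, Finset.mul_sum]
  have hterm : ∀ i ∈ Finset.range (k + 1),
      br F k * ((-1 : K F) ^ i / L F i * ((D F (k - i))⁻¹) ^ rr F ^ i)
        = (fun i => br F i * ((-1 : K F) ^ i / L F i * ((D F (k - i))⁻¹) ^ rr F ^ i)) i
          + (fun i => br F (k - i) ^ rr F ^ i
              * ((-1 : K F) ^ i / L F i * ((D F (k - i))⁻¹) ^ rr F ^ i)) i := by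
    intro i hi
    simp only
    rw [br_split F hp hc hcard (show i ≤ k by have := Finset.mem_range.mp hi; omega)]
    ring
  rw [Finset.sum_congr rfl hterm, Finset.sum_add_distrib,
    Finset.sum_range_succ' (fun i => br F i
      * ((-1 : K F) ^ i / L F i * ((D F (k - i))⁻¹) ^ rr F ^ i)) k,
    Finset.sum_range_succ (fun i => br F (k - i) ^ rr F ^ i
      * ((-1 : K F) ^ i / L F i * ((D F (k - i))⁻¹) ^ rr F ^ i)) k]
  have hu0 : br F 0 * ((-1 : K F) ^ 0 / L F 0 * ((D F (k - 0))⁻¹) ^ rr F ^ 0) = 0 := by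
    rw [br_zero, zero_mul]
  have hvk : br F (k - k) ^ rr F ^ k
      * ((-1 : K F) ^ k / L F k * ((D F (k - k))⁻¹) ^ rr F ^ k) = 0 := by
    rw [Nat.sub_self, br_zero,
      zero_pow (Nat.pos_iff_ne_zero.mp (pow_pos (rr_pos F) k)), zero_mul]
  rw [hu0, hvk, add_zero, add_zero, ← Finset.sum_add_distrib]
  apply Finset.sum_eq_zero
  intro i hi
  have hik : i < k := Finset.mem_range.mp hi
  have e1 : k - (i + 1) = k - 1 - i := by omega
  have e2 : k - i = (k - 1 - i) + 1 := by omega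
  have e3 : rr F * rr F ^ i = rr F ^ (i + 1) := (pow_succ' (rr F) i).symm
  rw [e1, e2, term_u F i (((D F (k - 1 - i))⁻¹) ^ rr F ^ (i + 1)),
    term_v F i (k - 1 - i) (rr F ^ i), e3]
  ring

lemma ccomp_logC {p s : ℕ} (hp : p.Prime) (hc : CharP (K F) p)
    (hcard : rr F = p ^ s) : ccomp F (logC F) = PowerSeries.X := by
  ext n
  rw [ccomp, PowerSeries.coeff_mk]
  have step1 : ∀ m ∈ Finset.range (n + 1),
      PowerSeries.coeff (R := K F) m (logC F) * PowerSeries.coeff (R := K F) n (eC F ^ m)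
        = ∑ i ∈ Finset.range (n + 1),
            (if m = rr F ^ i
              then (-1 : K F) ^ i / L F i * PowerSeries.coeff (R := K F) n (eC F ^ m) else 0) := by
    intro m hm
    rw [logC, PowerSeries.coeff_mk, Finset.sum_mul]
    simp_rw [ite_mul, zero_mul]
    apply Finset.sum_subset
      (Finset.range_subset_range.2 (by have := Finset.mem_range.mp hm; omega))
    intro i _ hi
    refine if_neg fun hcon => ?_
    have h1 : i < rr F ^ i := Nat.lt_pow_self (n := i) (two_le_rr F)
    have h2 := Finset.mem_range.not.mp hi
    have h3 := Finset.mem_range.mp hm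
    omega
  rw [Finset.sum_congr rfl step1, Finset.sum_comm]
  have step2 : ∀ i ∈ Finset.range (n + 1),
      (∑ m ∈ Finset.range (n + 1),
          if m = rr F ^ i
            then (-1 : K F) ^ i / L F i * PowerSeries.coeff (R := K F) n (eC F ^ m) else 0)
        = (-1 : K F) ^ i / L F i * PowerSeries.coeff (R := K F) n (eC F ^ rr F ^ i) := by
    intro i _
    rw [Finset.sum_ite_eq' (Finset.range (n + 1)) (rr F ^ i)
      (fun m => (-1 : K F) ^ i / L F i * PowerSeries.coeff (R := K F) n (eC F ^ m))]
    by_cases hmem : rr F ^ i ∈ Finset.range (n + 1)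
    · rw [if_pos hmem]
    · rw [if_neg hmem, coeff_eC_pow_zero_of_lt F
        (show n < rr F ^ i by have := Finset.mem_range.not.mp hmem; omega), mul_zero]
  rw [Finset.sum_congr rfl step2]
  by_cases hpow : ∃ k, n = rr F ^ k
  · obtain ⟨k, rfl⟩ := hpow
    have hkn : k < rr F ^ k := Nat.lt_pow_self (n := k) (two_le_rr F)
    have hsub : Finset.range (k + 1) ⊆ Finset.range (rr F ^ k + 1) :=
      Finset.range_subset_range.2 (by omega)
    rw [← Finset.sum_subset hsub (fun i hi hni => by
      rw [coeff_eC_pow_at_rpow_gt F hp hc hcard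
        (show k < i by
          have := Finset.mem_range.not.mp hni
          omega), mul_zero])]
    have step3 : ∀ i ∈ Finset.range (k + 1),
        (-1 : K F) ^ i / L F i * PowerSeries.coeff (R := K F) (rr F ^ k) (eC F ^ rr F ^ i)
          = (-1 : K F) ^ i / L F i * ((D F (k - i))⁻¹) ^ rr F ^ i := fun i hi => by
      rw [coeff_eC_pow_at_rpow_le F hp hc hcard
        (show i ≤ k by have := Finset.mem_range.mp hi; omega)]
    rw [Finset.sum_congr rfl step3]
    rcases Nat.eq_zero_or_pos k with hk0 | hkpos
    · subst hk0
      rw [Finset.sum_range_one, PowerSeries.coeff_X]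
      norm_num [L, D]
    · rw [Ssum F hp hc hcard (by omega), PowerSeries.coeff_X, if_neg]
      have h5 : rr F ≤ rr F ^ k := by
        calc rr F = rr F ^ 1 := (pow_one _).symm
          _ ≤ rr F ^ k := Nat.pow_le_pow_right (rr_pos F) (by omega)
      have := two_le_rr F
      omega
  · push_neg at hpow
    rw [PowerSeries.coeff_X, if_neg (fun h1 => hpow 0 (by simpa using h1))]
    apply Finset.sum_eq_zero
    intro i _
    rw [coeff_eC_pow_not F hp hc hcard hpow i, mul_zero]

lemma comp_inverse {p s : ℕ} (hp : p.Prime) (hc : CharP (K F) p)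
    (hcard : rr F = p ^ s) : eCdivZ F * ccomp F (logCdivZ F) = 1 := by
  have h1 : ccomp F (logC F) = PowerSeries.X := ccomp_logC F hp hc hcard
  rw [logC_eq, ccomp_mul, ccomp_X, eC_eq] at h1
  have h2 : PowerSeries.X * (eCdivZ F * ccomp F (logCdivZ F))
      = PowerSeries.X * 1 := by rw [mul_one, ← mul_assoc]; exact h1
  exact mul_left_cancel₀ PowerSeries.X_ne_zero h2

lemma Cf_rpow (j : ℕ) :
    Cf F (rr F ^ j - 1) = ∏ l ∈ Finset.range j, D F l ^ (rr F - 1) := by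
  have hrj : 1 ≤ rr F ^ j := Nat.one_le_pow _ _ (rr_pos F)
  have hjn : j ≤ (rr F ^ j - 1) + 1 := by have := Nat.lt_pow_self (n := j) (two_le_rr F); omega
  rw [Cf, ← Finset.prod_subset (Finset.range_subset_range.2 hjn) (fun l _ hnl => by
    have h4 : rr F ^ j ≤ rr F ^ l :=
      Nat.pow_le_pow_right (rr_pos F) (by have := Finset.mem_range.not.mp hnl; omega)
    rw [Nat.div_eq_of_lt (by omega), Nat.zero_mod, pow_zero])]
  apply Finset.prod_congr rfl
  intro l hl
  have hlj : l < j := Finset.mem_range.mp hl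
  congr 1
  have hll : rr F ^ l * rr F ^ (j - l) = rr F ^ j := by
    rw [← pow_add, Nat.add_sub_cancel' (le_of_lt hlj)]
  have ha : 1 ≤ rr F ^ l := Nat.one_le_pow _ _ (rr_pos F)
  have hb : 1 ≤ rr F ^ (j - l) := Nat.one_le_pow _ _ (rr_pos F)
  have h2 : rr F ^ l * (rr F ^ (j - l) - 1) + rr F ^ l = rr F ^ l * rr F ^ (j - l) := by
    obtain ⟨c, hcc⟩ := Nat.exists_eq_add_of_le hb
    rw [hcc]
    have hcc2 : 1 + c - 1 = c := by omega
    rw [hcc2]; ring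
  have hdiv : (rr F ^ j - 1) / rr F ^ l = rr F ^ (j - l) - 1 := by
    have hn2 : rr F ^ j - 1 = rr F ^ l * (rr F ^ (j - l) - 1) + (rr F ^ l - 1) := by omega
    rw [hn2, Nat.mul_add_div (by omega), Nat.div_eq_of_lt (by omega), add_zero]
  rw [hdiv]
  have hjl : 1 ≤ j - l := by omega
  have hbb : rr F * rr F ^ (j - l - 1) = rr F ^ (j - l) := by
    rw [← pow_succ']; congr 1; omega
  have hc1 : 1 ≤ rr F ^ (j - l - 1) := Nat.one_le_pow _ _ (rr_pos F)
  have h3 : rr F * (rr F ^ (j - l - 1) - 1) + (rr F - 1) = rr F ^ (j - l) - 1 := by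
    have h5 : rr F * (rr F ^ (j - l - 1) - 1) + rr F = rr F * rr F ^ (j - l - 1) := by
      obtain ⟨c, hcc⟩ := Nat.exists_eq_add_of_le hc1
      rw [hcc]
      have hcc2 : 1 + c - 1 = c := by omega
      rw [hcc2]; ring
    have := two_le_rr F
    omega
  rw [← h3, Nat.mul_add_mod, Nat.mod_eq_of_lt (by have := two_le_rr F; omega)]

lemma prodD (j : ℕ) :
    L F j * ∏ l ∈ Finset.range j, D F l ^ (rr F - 1) = D F j := by
  induction j with
  | zero => simp [L, D]
  | succ j ih =>
    rw [Finset.prod_range_succ, L_succ]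
    calc br F (j + 1) * L F j * ((∏ l ∈ Finset.range j, D F l ^ (rr F - 1))
            * D F j ^ (rr F - 1))
        = br F (j + 1) * ((L F j * ∏ l ∈ Finset.range j, D F l ^ (rr F - 1))
            * D F j ^ (rr F - 1)) := by ring
      _ = br F (j + 1) * (D F j * D F j ^ (rr F - 1)) := by rw [ih]
      _ = br F (j + 1) * D F j ^ rr F := by
          rw [← pow_succ']
          congr 2
          have := two_le_rr F; omega
      _ = D F (j + 1) := (D_succ F j).symm

end Aux4
/-- Theorem: `Σ_{m=0}^n S2_C(n, m) · CC_m` equals `1/L_j` if `n = r^j - 1` for some `j ≥ 0`,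
and equals `0` otherwise. -/
theorem sum_stirlingCarlitzSecond_mul_cauchyCarlitz
    (CC : ℕ → K F) (S2C : ℕ → ℕ → K F)
    (hCC : (PowerSeries.mk fun n => CC n / Cf F n) * logCdivZ F = 1)
    (hS2C : ∀ n k : ℕ,
      PowerSeries.coeff (R := K F) n (eC F ^ k) / Cf F k = S2C n k / Cf F n)
    (n : ℕ) :
    (∀ j : ℕ, n = (rr F) ^ j - 1 →
        ∑ m ∈ Finset.range (n + 1), S2C n m * CC m = 1 / L F j) ∧
      ((∀ j : ℕ, n ≠ (rr F) ^ j - 1) →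
        ∑ m ∈ Finset.range (n + 1), S2C n m * CC m = 0) := by
  obtain ⟨p, s, hp, hcard, hc⟩ := aux_char F
  have hAcomp : ccomp F (PowerSeries.mk fun m => CC m / Cf F m) = eCdivZ F := by
    have h1 := comp_inverse F hp hc hcard
    have h2 : ccomp F (PowerSeries.mk fun m => CC m / Cf F m) * ccomp F (logCdivZ F)
        = 1 := by rw [← ccomp_mul, hCC, ccomp_one]
    calc ccomp F (PowerSeries.mk fun m => CC m / Cf F m)
        = ccomp F (PowerSeries.mk fun m => CC m / Cf F m)
            * (eCdivZ F * ccomp F (logCdivZ F)) := by rw [h1, mul_one]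
      _ = eCdivZ F * (ccomp F (PowerSeries.mk fun m => CC m / Cf F m)
            * ccomp F (logCdivZ F)) := by ring
      _ = eCdivZ F := by rw [h2, mul_one]
  have key : ∑ m ∈ Finset.range (n + 1), S2C n m * CC m
      = Cf F n * PowerSeries.coeff (R := K F) (n + 1) (eC F) := by
    have hterm : ∀ m ∈ Finset.range (n + 1), S2C n m * CC m
        = Cf F n * (PowerSeries.coeff (R := K F) m (PowerSeries.mk fun l => CC l / Cf F l)
            * PowerSeries.coeff (R := K F) n (eC F ^ m)) := by
      intro m _
      have h := (div_eq_div_iff (Cf_ne F m) (Cf_ne F n)).mp (hS2C n m)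
      rw [PowerSeries.coeff_mk]
      have hm := Cf_ne F m
      field_simp
      linear_combination (-(CC m)) * h
    rw [Finset.sum_congr rfl hterm, ← Finset.mul_sum]
    congr 1
    have h3 := congrArg (PowerSeries.coeff (R := K F) n) hAcomp
    rw [ccomp, PowerSeries.coeff_mk] at h3
    rw [h3, eCdivZ, PowerSeries.coeff_mk]
  constructor
  · intro j hj
    have hrj : 1 ≤ rr F ^ j := Nat.one_le_pow _ _ (rr_pos F)
    have hnj : n + 1 = rr F ^ j := by omega
    rw [key, hnj, coeff_eC_rpow]
    have h1 := prodD F j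
    have h2 : Cf F n = ∏ l ∈ Finset.range j, D F l ^ (rr F - 1) := by
      rw [hj]; exact Cf_rpow F j
    rw [h2]
    have hD := D_ne F j
    have hL := L_ne F j
    field_simp
    linear_combination h1
  · intro hne
    rw [key, coeff_eC_not F (fun j hj => hne j (by
      have : 1 ≤ rr F ^ j := Nat.one_le_pow _ _ (rr_pos F)
      omega)), mul_zero]
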